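/- Fix a root α and a subset X ⊆ [1,|s|]. Define γ ∼_α^X δ on galleries of type s to mean: γ_i ≠ δ_i implies both β_i(γ) = ±α and i ∈ X. Then γ ∼_α^X δ holds if and only if δ = f_{i_n}⋯f_{i_1} γ for some indices i_1,…,i_n ∈ X such that for each k, β_{i_k}(f_{i_{k-1}}⋯f_{i_1} γ) = ±α. -/

import Mathlib

section GallerySetup

variable {W : Type} [Group W] {E : Type} [AddCommGroup E] [DistribMulAction W E]

/-- The Weyl-group element contributed by position `i` of a combinatorial gallery:
`s_{α_i}` if the gallery crosses the wall there (`γ i = true`), and `e` otherwise. -/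
def galElt (s : E → W) {r : ℕ} (α : Fin r → E) (γ : Fin r → Bool) (i : Fin r) : W :=
  if γ i then s (α i) else 1

/-- `γ^k = γ₁ ⋯ γ_k`, the product of the first `k` entries of the gallery. -/
def gpref (s : E → W) {r : ℕ} (α : Fin r → E) (γ : Fin r → Bool) (k : ℕ) : W :=
  (((List.finRange r).take k).map (galElt s α γ)).prod

/-- `β_i(γ) = γ^i (-α_i)` (here `i : Fin r` is the 0-based index of the paper's `i+1`). -/
def gbeta (s : E → W) {r : ℕ} (α : Fin r → E) (γ : Fin r → Bool) (i : Fin r) : E :=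
  gpref s α γ (i.val + 1) • (-(α i))

/-- The folding operator at position `i`: it replaces `γ_i` by `γ_i s_i`. -/
def gfold {r : ℕ} (γ : Fin r → Bool) (i : Fin r) : Fin r → Bool :=
  Function.update γ i (!(γ i))

end GallerySetup

set_option linter.unusedSectionVars false

section GalleryAux

variable {W : Type} [Group W] {E : Type} [AddCommGroup E] [DistribMulAction W E]
variable (s : E → W) {r : ℕ} (α : Fin r → E)

lemma gpref_succ (γ : Fin r → Bool) (k : ℕ) (hk : k < r) :
    gpref s α γ (k+1) = gpref s α γ k * galElt s α γ ⟨k, hk⟩ := by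
  unfold gpref
  rw [List.take_succ]
  simp [List.getElem?_eq_getElem, hk]

lemma gpref_succ_of_ge (γ : Fin r → Bool) (k : ℕ) (hk : r ≤ k) :
    gpref s α γ (k+1) = gpref s α γ k := by
  unfold gpref
  rw [List.take_of_length_le (by simpa using hk.trans (Nat.le_succ k)),
    List.take_of_length_le (by simpa using hk)]

lemma gpref_congr (γ γ' : Fin r → Bool) (k : ℕ) (h : ∀ j : Fin r, j.val < k → γ j = γ' j) :
    gpref s α γ k = gpref s α γ' k := by
  induction k with
  | zero => simp [gpref]
  | succ k ih =>
    by_cases hk : k < r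
    · rw [gpref_succ s α γ k hk, gpref_succ s α γ' k hk,
        ih (fun j hj => h j (Nat.lt_succ_of_lt hj))]
      congr 1
      unfold galElt
      rw [h ⟨k, hk⟩ (Nat.lt_succ_self k)]
    · rw [gpref_succ_of_ge s α γ k (le_of_not_gt hk),
        gpref_succ_of_ge s α γ' k (le_of_not_gt hk),
        ih (fun j hj => h j (Nat.lt_succ_of_lt hj))]

lemma gfold_apply_ne (γ : Fin r → Bool) (i j : Fin r) (h : j ≠ i) : gfold γ i j = γ j :=
  Function.update_of_ne h _ _

lemma gfold_apply_self (γ : Fin r → Bool) (i : Fin r) : gfold γ i i = !(γ i) :=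
  Function.update_self _ _ _

lemma galElt_gfold_self (hsq : ∀ b : E, s b * s b = 1) (γ : Fin r → Bool) (i : Fin r) :
    galElt s α (gfold γ i) i = galElt s α γ i * s (α i) := by
  unfold galElt
  rw [gfold_apply_self]
  cases h : γ i with
  | true => simp [hsq (α i)]
  | false => simp

lemma gpref_gfold_le (γ : Fin r → Bool) (i : Fin r) (k : ℕ) (hk : k ≤ i.val) :
    gpref s α (gfold γ i) k = gpref s α γ k :=
  gpref_congr s α _ _ k (fun j hj => gfold_apply_ne γ i j (by
    intro h; subst h; omega))

lemma gpref_gfold_gt (hconj : ∀ (u : W) (b : E), s (u • b) = u * s b * u⁻¹)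
    (hneg : ∀ b : E, s (-b) = s b) (hsq : ∀ b : E, s b * s b = 1)
    (γ : Fin r → Bool) (i : Fin r) (k : ℕ) (hk : i.val < k) :
    gpref s α (gfold γ i) k = s (gbeta s α γ i) * gpref s α γ k := by
  have key : s (gbeta s α γ i) * gpref s α γ (i.val+1)
      = gpref s α γ (i.val+1) * s (α i) := by
    rw [gbeta, hconj, hneg]
    group
  induction k with
  | zero => omega
  | succ k ih =>
    rcases Nat.lt_or_ge i.val k with h | h
    · by_cases hk' : k < r
      · rw [gpref_succ s α _ k hk', gpref_succ s α γ k hk', ih h, mul_assoc]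
        congr 2
        unfold galElt
        rw [gfold_apply_ne γ i ⟨k, hk'⟩ (by
          intro hh; apply absurd (congrArg Fin.val hh); simp; omega)]
      · rw [gpref_succ_of_ge s α _ k (le_of_not_gt hk'),
          gpref_succ_of_ge s α γ k (le_of_not_gt hk'), ih h]
    · have hik : k = i.val := by omega
      subst hik
      rw [gpref_succ s α _ i.val i.isLt, gpref_succ s α γ i.val i.isLt, Fin.eta,
        galElt_gfold_self s α hsq, gpref_gfold_le s α γ i i.val (le_refl _),
        ← mul_assoc]
      have h2 : gpref s α γ i.val * galElt s α γ i = gpref s α γ (i.val + 1) := by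
        rw [gpref_succ s α γ i.val i.isLt, Fin.eta]
      rw [h2, ← key]

lemma gbeta_gfold_lt (γ : Fin r → Bool) (i j : Fin r) (hj : j.val < i.val) :
    gbeta s α (gfold γ i) j = gbeta s α γ j := by
  unfold gbeta
  rw [gpref_gfold_le s α γ i (j.val+1) (by omega)]

lemma gbeta_gfold_ge (hconj : ∀ (u : W) (b : E), s (u • b) = u * s b * u⁻¹)
    (hneg : ∀ b : E, s (-b) = s b) (hsq : ∀ b : E, s b * s b = 1)
    (γ : Fin r → Bool) (i j : Fin r) (hj : i.val ≤ j.val) :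
    gbeta s α (gfold γ i) j = s (gbeta s α γ i) • gbeta s α γ j := by
  conv_lhs => rw [gbeta, gpref_gfold_gt s α hconj hneg hsq γ i (j.val+1) (by omega), mul_smul]
  rfl

lemma smul_gbeta_self (hconj : ∀ (u : W) (b : E), s (u • b) = u * s b * u⁻¹)
    (hneg : ∀ b : E, s (-b) = s b) (hsa : ∀ j : Fin r, s (α j) • α j = -(α j))
    (γ : Fin r → Bool) (i : Fin r) :
    s (gbeta s α γ i) • gbeta s α γ i = -(gbeta s α γ i) := by
  rw [gbeta, hconj, hneg, mul_smul, mul_smul, inv_smul_smul]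
  simp [smul_neg, hsa]

lemma w_smul_a (hconj : ∀ (u : W) (b : E), s (u • b) = u * s b * u⁻¹)
    (hneg : ∀ b : E, s (-b) = s b) (hsa : ∀ j : Fin r, s (α j) • α j = -(α j))
    (γ : Fin r → Bool) (i : Fin r) (a : E)
    (hb : gbeta s α γ i = a ∨ gbeta s α γ i = -a) :
    s (gbeta s α γ i) • a = -a := by
  have h := smul_gbeta_self s α hconj hneg hsa γ i
  rcases hb with hh | hh
  · rw [hh] at h ⊢
    exact h
  · rw [hh, hneg] at h ⊢
    rw [smul_neg, neg_neg] at h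
    exact neg_eq_iff_eq_neg.mp h

lemma pm_pres (hconj : ∀ (u : W) (b : E), s (u • b) = u * s b * u⁻¹)
    (hneg : ∀ b : E, s (-b) = s b) (hsq : ∀ b : E, s b * s b = 1)
    (hsa : ∀ j : Fin r, s (α j) • α j = -(α j))
    (γ : Fin r → Bool) (i : Fin r) (a : E)
    (hb : gbeta s α γ i = a ∨ gbeta s α γ i = -a) (j : Fin r) :
    (gbeta s α (gfold γ i) j = a ∨ gbeta s α (gfold γ i) j = -a) ↔
      (gbeta s α γ j = a ∨ gbeta s α γ j = -a) := by
  rcases Nat.lt_or_ge j.val i.val with h | h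
  · rw [gbeta_gfold_lt s α γ i j h]
  · rw [gbeta_gfold_ge s α hconj hneg hsq γ i j h]
    have hw : s (gbeta s α γ i) • a = -a := w_smul_a s α hconj hneg hsa γ i a hb
    have hw' : s (gbeta s α γ i) • (-a) = a := by rw [smul_neg, hw, neg_neg]
    constructor
    · rintro (hh | hh)
      · right; exact smul_left_cancel _ (by rw [hh, hw'])
      · left; exact smul_left_cancel _ (by rw [hh, hw])
    · rintro (hh | hh)
      · right; rw [hh, hw]
      · left; rw [hh, hw']

lemma gallery_bwd (a : E) (X : Set (Fin r))
    (hconj : ∀ (u : W) (b : E), s (u • b) = u * s b * u⁻¹)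
    (hneg : ∀ b : E, s (-b) = s b) (hsq : ∀ b : E, s b * s b = 1)
    (hsa : ∀ j : Fin r, s (α j) • α j = -(α j)) :
    ∀ (l : List (Fin r)) (γ : Fin r → Bool),
      (∀ i ∈ l, i ∈ X) →
      (∀ (l₁ : List (Fin r)) (i : Fin r) (l₂ : List (Fin r)), l = l₁ ++ i :: l₂ →
        gbeta s α (l₁.foldl gfold γ) i = a ∨ gbeta s α (l₁.foldl gfold γ) i = -a) →
      ∀ i : Fin r, γ i ≠ l.foldl gfold γ i →
        (gbeta s α γ i = a ∨ gbeta s α γ i = -a) ∧ i ∈ X := by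
  intro l
  induction l with
  | nil => intro γ _ _ i hi; simp at hi
  | cons j l' ih =>
    intro γ hX hsteps i hi
    have hbj : gbeta s α γ j = a ∨ gbeta s α γ j = -a := by
      simpa using hsteps [] j l' rfl
    have hX' : ∀ i ∈ l', i ∈ X := fun i h => hX i (List.mem_cons_of_mem j h)
    have hsteps' : ∀ (l₁ : List (Fin r)) (i : Fin r) (l₂ : List (Fin r)),
        l' = l₁ ++ i :: l₂ →
        gbeta s α (l₁.foldl gfold (gfold γ j)) i = a ∨
          gbeta s α (l₁.foldl gfold (gfold γ j)) i = -a := by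
      intro l₁ i l₂ heq
      have := hsteps (j :: l₁) i l₂ (by rw [heq, List.cons_append])
      simpa using this
    by_cases hij : i = j
    · subst hij
      exact ⟨hbj, hX i (List.mem_cons_self)⟩
    · rw [List.foldl_cons] at hi
      have hi' : gfold γ j i ≠ List.foldl gfold (gfold γ j) l' i := by
        rwa [gfold_apply_ne γ j i hij]
      obtain ⟨hb, hXi⟩ := ih (gfold γ j) hX' hsteps' i hi'
      exact ⟨(pm_pres s α hconj hneg hsq hsa γ j a hbj i).mp hb, hXi⟩

lemma gallery_fwd (a : E) (X : Set (Fin r)) (δ : Fin r → Bool)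
    (hconj : ∀ (u : W) (b : E), s (u • b) = u * s b * u⁻¹)
    (hneg : ∀ b : E, s (-b) = s b) (hsq : ∀ b : E, s b * s b = 1)
    (hsa : ∀ j : Fin r, s (α j) • α j = -(α j)) :
    ∀ (n : ℕ) (γ : Fin r → Bool),
      (Finset.univ.filter (fun i => γ i ≠ δ i)).card = n →
      (∀ i : Fin r, γ i ≠ δ i →
        (gbeta s α γ i = a ∨ gbeta s α γ i = -a) ∧ i ∈ X) →
      ∃ l : List (Fin r), (∀ i ∈ l, i ∈ X) ∧ δ = l.foldl gfold γ ∧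
        ∀ (l₁ : List (Fin r)) (i : Fin r) (l₂ : List (Fin r)), l = l₁ ++ i :: l₂ →
          gbeta s α (l₁.foldl gfold γ) i = a ∨ gbeta s α (l₁.foldl gfold γ) i = -a := by
  intro n
  induction n with
  | zero =>
    intro γ hcard _
    have hfe : ∀ i, γ i = δ i := by
      intro i
      by_contra hne
      have hmem : i ∈ Finset.univ.filter (fun i => γ i ≠ δ i) := by simp [hne]
      rw [Finset.card_eq_zero] at hcard
      rw [hcard] at hmem
      exact absurd hmem (Finset.notMem_empty i)
    refine ⟨[], by simp, ?_, ?_⟩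
    · funext i
      exact (hfe i).symm
    · intro l₁ i l₂ h
      exact absurd h (by simp)
  | succ n ih =>
    intro γ hcard hyp
    have hne : (Finset.univ.filter (fun i => γ i ≠ δ i)).Nonempty := by
      rw [← Finset.card_pos, hcard]; omega
    obtain ⟨j, hj⟩ := hne
    rw [Finset.mem_filter] at hj
    have hjne : γ j ≠ δ j := hj.2
    obtain ⟨hbj, hjX⟩ := hyp j hjne
    have hδj : gfold γ j j = δ j := by
      rw [gfold_apply_self]
      cases hc : γ j <;> cases hd : δ j <;> simp_all
    have hfilter : Finset.univ.filter (fun i => gfold γ j i ≠ δ i)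
        = (Finset.univ.filter (fun i => γ i ≠ δ i)).erase j := by
      ext i
      simp only [Finset.mem_filter, Finset.mem_erase, Finset.mem_univ, true_and]
      constructor
      · intro h
        have hij : i ≠ j := by rintro rfl; exact h hδj
        exact ⟨hij, by rwa [gfold_apply_ne γ j i hij] at h⟩
      · rintro ⟨hij, h⟩
        rwa [gfold_apply_ne γ j i hij]
    have hcard' : (Finset.univ.filter (fun i => gfold γ j i ≠ δ i)).card = n := by
      rw [hfilter, Finset.card_erase_of_mem (Finset.mem_filter.mpr ⟨Finset.mem_univ j, hjne⟩),
        hcard]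
      omega
    have hyp' : ∀ i : Fin r, gfold γ j i ≠ δ i →
        (gbeta s α (gfold γ j) i = a ∨ gbeta s α (gfold γ j) i = -a) ∧ i ∈ X := by
      intro i h
      have hij : i ≠ j := by rintro rfl; exact h hδj
      rw [gfold_apply_ne γ j i hij] at h
      obtain ⟨hb, hXi⟩ := hyp i h
      exact ⟨(pm_pres s α hconj hneg hsq hsa γ j a hbj i).mpr hb, hXi⟩
    obtain ⟨l', h1, h2, h3⟩ := ih (gfold γ j) hcard' hyp'
    refine ⟨j :: l', ?_, ?_, ?_⟩
    · intro i hi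
      rcases List.mem_cons.mp hi with rfl | hi
      · exact hjX
      · exact h1 i hi
    · simpa using h2
    · intro l₁ i l₂ heq
      cases l₁ with
      | nil =>
        rw [List.nil_append] at heq
        injection heq with e1 e2
        subst e1
        simpa using hbj
      | cons x l₁' =>
        rw [List.cons_append] at heq
        injection heq with e1 e2
        subst e1
        have := h3 l₁' i l₂ e2
        simpa using this

end GalleryAux


/-- Characterization of the relation `∼_α^X` (γ and δ differ only at places of `X` whose
wall is `L_α`): `γ ∼_a^X δ` holds if and only if `δ = f_{i_n} ⋯ f_{i_1} γ` for some
indices `i_1, …, i_n ∈ X` such that at each step `β_{i_k}(f_{i_{k-1}} ⋯ f_{i_1} γ) = ±a`.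
Foldings are applied left-to-right along the list `[i_1, …, i_n]`. -/
theorem stmt8 {W : Type} [Group W] {E : Type} [AddCommGroup E] [DistribMulAction W E]
    (s : E → W) {r : ℕ} (α : Fin r → E) (a : E) (X : Set (Fin r))
    (γ δ : Fin r → Bool)
    (hconj : ∀ (u : W) (b : E), s (u • b) = u * s b * u⁻¹)
    (hneg : ∀ b : E, s (-b) = s b)
    (hsq : ∀ b : E, s b * s b = 1)
    (hsa : ∀ j : Fin r, s (α j) • α j = -(α j)) :
    (∀ i : Fin r, γ i ≠ δ i →
        (gbeta s α γ i = a ∨ gbeta s α γ i = -a) ∧ i ∈ X) ↔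
    ∃ l : List (Fin r), (∀ i ∈ l, i ∈ X) ∧ δ = l.foldl gfold γ ∧
      ∀ (l₁ : List (Fin r)) (i : Fin r) (l₂ : List (Fin r)), l = l₁ ++ i :: l₂ →
        gbeta s α (l₁.foldl gfold γ) i = a ∨ gbeta s α (l₁.foldl gfold γ) i = -a := by
  constructor
  · intro hyp
    exact gallery_fwd s α a X δ hconj hneg hsq hsa
      (Finset.univ.filter (fun i => γ i ≠ δ i)).card γ rfl hyp
  · rintro ⟨l, h1, h2, h3⟩ i hi
    rw [h2] at hi
    exact gallery_bwd s α a X hconj hneg hsq hsa l γ h1 h3 i hi
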